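/- arXiv:1311.5646 — 6 statements merged into one kernel-verified Lean document; each statement's English description precedes it below -/
import Mathlib

section
/- Let n and ℓ be positive integers with ℓ odd such that Ω_ℓ(n) = (1^ℓ+1)(2^ℓ+1)···(n^ℓ+1) is a powerful number. If p is a prime with (n+1)/2 < p ≤ n+1, then gcd(p(p−1), ℓ) > 1. -/
/-- `m` is a powerful number: every prime dividing `m` divides it with exponent at least 2. -/
def IsPowerful (m : ℕ) : Prop := ∀ p : ℕ, p.Prime → p ∣ m → p ^ 2 ∣ m

/-- `Omega ℓ n = (1^ℓ+1)(2^ℓ+1)⋯(n^ℓ+1)`. -/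
def Omega (ℓ n : ℕ) : ℕ := ∏ a ∈ Finset.Icc 1 n, (a ^ ℓ + 1)

theorem stmt_3 (n ℓ : ℕ) (hn : 0 < n) (hℓpos : 0 < ℓ) (hℓodd : Odd ℓ)
    (hpow : IsPowerful (Omega ℓ n))
    (p : ℕ) (hp : p.Prime) (hlow : n + 1 < 2 * p) (hhigh : p ≤ n + 1) :
    1 < Nat.gcd (p * (p - 1)) ℓ := by
  by_contra h
  have hg : Nat.Coprime (p * (p - 1)) ℓ := by
    have := Nat.gcd_dvd_right (p * (p - 1)) ℓ
    have h0 : Nat.gcd (p * (p - 1)) ℓ ≠ 0 := fun hh => by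
      have := Nat.eq_zero_of_gcd_eq_zero_right hh; omega
    unfold Nat.Coprime; omega
  have hpℓ : Nat.Coprime p ℓ := Nat.Coprime.coprime_dvd_left (dvd_mul_right _ _) hg
  have hp1ℓ : Nat.Coprime (p - 1) ℓ := Nat.Coprime.coprime_dvd_left (dvd_mul_left _ _) hg
  have hp2 : 2 ≤ p := hp.two_le
  have hk : p - 1 ∈ Finset.Icc 1 n := by simp [Finset.mem_Icc]; omega
  -- Ω = A * B
  set A := (p - 1) ^ ℓ + 1 with hA
  set B := ∏ a ∈ (Finset.Icc 1 n).erase (p - 1), (a ^ ℓ + 1) with hB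
  have hΩ : Omega ℓ n = A * B := (Finset.mul_prod_erase _ _ hk).symm
  -- p ∣ A
  have hpA : p ∣ A := by
    have : ((A : ℕ) : ZMod p) = 0 := by
      push_cast [hA]
      rw [Nat.cast_sub (by omega)]
      simp [hℓodd.neg_one_pow]
    exact (ZMod.natCast_eq_zero_iff _ _).mp this
  -- key uniqueness: any a ∈ Icc 1 n with p ∣ a^ℓ + 1 must be p - 1
  have key : ∀ a ∈ Finset.Icc 1 n, p ∣ a ^ ℓ + 1 → a = p - 1 := by
    intro a ha hdvd
    simp only [Finset.mem_Icc] at ha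
    haveI : Fact p.Prime := ⟨hp⟩
    have hpa : ¬ p ∣ a := by
      intro hpa
      have : p ∣ 1 := (Nat.dvd_add_right (hpa.pow (by omega))).mp hdvd
      have := Nat.le_of_dvd one_pos this; omega
    have haz : (a : ZMod p) ≠ 0 := fun hz => hpa ((ZMod.natCast_eq_zero_iff _ _).mp hz)
    have hmod : (a : ZMod p) ^ ℓ = -1 := by
      have : ((a ^ ℓ + 1 : ℕ) : ZMod p) = 0 := (ZMod.natCast_eq_zero_iff _ _).mpr hdvd
      push_cast at this
      linear_combination this
    -- lift to units
    have hcard : Nat.Coprime (Nat.card (ZMod p)ˣ) ℓ := by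
      have : Nat.card (ZMod p)ˣ = p - 1 := by
        rw [Nat.card_eq_fintype_card, ZMod.card_units_eq_totient, Nat.totient_prime hp]
      rw [this]; exact hp1ℓ
    have hiu : IsUnit (a : ZMod p) := (ZMod.isUnit_iff_coprime a p).mpr
      (Nat.coprime_comm.mp (hp.coprime_iff_not_dvd.mpr hpa))
    have hinj := (powCoprime hcard).injective
    have heq : hiu.unit ^ ℓ = (-1 : (ZMod p)ˣ) ^ ℓ := by
      ext
      push_cast
      rw [hiu.unit_spec, hmod, hℓodd.neg_one_pow]
    have : hiu.unit = (-1 : (ZMod p)ˣ) := hinj heq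
    have hval : (a : ZMod p) = -1 := by
      have := congrArg (Units.val) this
      rwa [hiu.unit_spec] at this
    -- hence p ∣ a + 1
    have hpd : p ∣ a + 1 := by
      have : ((a + 1 : ℕ) : ZMod p) = 0 := by push_cast; rw [hval]; ring
      exact (ZMod.natCast_eq_zero_iff _ _).mp this
    obtain ⟨c, hc⟩ := hpd
    have h2' : p * c < p * 2 := by omega
    have h1 : c < 2 := Nat.lt_of_mul_lt_mul_left h2'
    have h0 : c ≠ 0 := by rintro rfl; omega
    have hc1 : c = 1 := by omega
    subst hc1
    rw [mul_one] at hc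
    omega
  -- p ∤ B
  have hpB : ¬ p ∣ B := by
    intro hdvd
    rw [hB, Prime.dvd_finset_prod_iff hp.prime] at hdvd
    obtain ⟨a, ha, hda⟩ := hdvd
    have := key a (Finset.mem_of_mem_erase ha) hda
    exact (Finset.ne_of_mem_erase ha) this
  -- p² ∤ A
  have hA0 : A ≠ 0 := by positivity
  have hp2A : ¬ p ^ 2 ∣ A := by
    rcases eq_or_ne p 2 with h2 | h2
    · have : A = 2 := by
        have : p - 1 = 1 := by omega
        simp [hA, this]
      rw [this, h2]; omega
    · haveI : Fact p.Prime := ⟨hp⟩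
      have hodd : Odd p := hp.odd_of_ne_two h2
      have hx : ¬ p ∣ p - 1 := by
        intro hd
        have := Nat.le_of_dvd (by omega) hd
        omega
      have hxy : p ∣ (p - 1) + 1 := by
        have : (p - 1) + 1 = p := by omega
        rw [this]
      have hℓnd : ¬ p ∣ ℓ := hp.coprime_iff_not_dvd.mp hpℓ
      have hval : padicValNat p A = 1 := by
        have hlte := padicValNat.pow_add_pow (p := p) hodd (x := p - 1) (y := 1) hxy hx hℓodd
        simp only [one_pow] at hlte
        have h1 : (p - 1) + 1 = p := by omega
        rw [hA, hlte, h1, padicValNat.self hp.one_lt,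
          padicValNat.eq_zero_of_not_dvd hℓnd]
      intro hdvd
      have := (Nat.Prime.pow_dvd_iff_le_factorization hp hA0).mp hdvd
      rw [Nat.factorization_def _ hp, hval] at this
      omega
  -- conclude
  have hpΩ : p ∣ Omega ℓ n := hΩ ▸ Dvd.dvd.mul_right hpA B
  have hsq := hpow p hp hpΩ
  rw [hΩ] at hsq
  have hcop : Nat.Coprime (p ^ 2) B := Nat.Coprime.pow_left _ (hp.coprime_iff_not_dvd.mpr hpB)
  exact hp2A (hcop.dvd_of_dvd_mul_right hsq)
end

section
/- Let ℓ be a positive odd integer and n an integer with n ≥ 3. Suppose there exist k distinct primes p₁, p₂, …, p_k, each satisfying (n+1)/2 < pᵢ ≤ n+1, such that for any two indices i ≠ j, the numbers pᵢ − 1 and p_j − 1 have no common odd prime factor. If Ω_ℓ(n) = (1^ℓ+1)(2^ℓ+1)···(n^ℓ+1) is a powerful number, then ℓ has at least k distinct prime factors. -/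
private lemma aux_pow {R : Type*} [CommRing R] (x : R) (hx : x ^ 2 = 0) (m : ℕ) :
    (x - 1) ^ (2 * m + 1) = (2 * m + 1 : ℕ) * x - 1 := by
  induction m with
  | zero => simp
  | succ m ih =>
    have h : 2 * (m + 1) + 1 = (2 * m + 1) + 2 := by ring
    rw [h, pow_add, ih]
    push_cast
    linear_combination ((2 * (m : R) + 1) * x - (4 * (m : R) + 3)) * hx

/-- If `p ≥ 1`, `ℓ` odd and `p^2 ∣ (p-1)^ℓ + 1` then `p ∣ ℓ`. -/
private lemma key_dvd (p ℓ : ℕ) (hp : 1 ≤ p) (hℓodd : Odd ℓ)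
    (h : p ^ 2 ∣ (p - 1) ^ ℓ + 1) : p ∣ ℓ := by
  rcases Nat.eq_or_lt_of_le hp with h1 | h2
  · simpa using (h1.symm ▸ (one_dvd ℓ))
  obtain ⟨m, hm⟩ := hℓodd
  set x : ZMod (p ^ 2) := (p : ZMod (p ^ 2)) with hxdef
  have hx : x ^ 2 = 0 := by
    rw [hxdef, ← Nat.cast_pow, ZMod.natCast_self]
  have hcast : (((p - 1) ^ ℓ + 1 : ℕ) : ZMod (p ^ 2)) = 0 :=
    (ZMod.natCast_eq_zero_iff _ _).mpr h
  have hsub : ((p - 1 : ℕ) : ZMod (p ^ 2)) = x - 1 := by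
    rw [Nat.cast_sub hp]; simp [hxdef]
  rw [Nat.cast_add, Nat.cast_pow, hsub, Nat.cast_one, hm] at hcast
  have hm2 : ℓ = 2 * m + 1 := by omega
  rw [show 2 * m + 1 = ℓ from hm2.symm] at hcast
  rw [hm2, aux_pow x hx m] at hcast
  have hfin : ((ℓ * p : ℕ) : ZMod (p ^ 2)) = 0 := by
    push_cast at hcast ⊢
    rw [hm2]
    push_cast
    linear_combination hcast
  have : p ^ 2 ∣ ℓ * p := (ZMod.natCast_eq_zero_iff _ _).mp hfin
  rw [pow_two] at this
  exact (Nat.mul_dvd_mul_iff_right (by omega : 0 < p)).mp this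

/-- Under the coprimality condition, the only `a ∈ [1,n]` with `p ∣ a^ℓ+1` is `p-1`. -/
private lemma unique_sol (p ℓ n a : ℕ) (hp : p.Prime) (hℓodd : Odd ℓ)
    (hgcd : Nat.Coprime ℓ (p - 1)) (ha1 : 1 ≤ a) (ha2 : a ≤ n)
    (h2p : n + 1 < 2 * p) (hdvd : p ∣ a ^ ℓ + 1) : a = p - 1 := by
  haveI : Fact p.Prime := ⟨hp⟩
  have hcast : ((a ^ ℓ + 1 : ℕ) : ZMod p) = 0 :=
    (ZMod.natCast_eq_zero_iff _ _).mpr hdvd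
  push_cast at hcast
  have hb : ((a : ZMod p)) ^ ℓ = -1 := by linear_combination hcast
  have hℓne : ℓ ≠ 0 := by obtain ⟨m0, hm0⟩ := hℓodd; omega
  have hbne : (a : ZMod p) ≠ 0 := by
    intro h0
    rw [h0, zero_pow hℓne] at hb
    have h10 : (1 : ZMod p) = 0 := by linear_combination hb
    exact one_ne_zero h10
  obtain ⟨u, hu⟩ := hbne.isUnit
  have hw : (-u) ^ ℓ = 1 := by
    apply Units.ext
    push_cast [hu]
    rw [hℓodd.neg_pow, hb]; ring
  have hord1 : orderOf (-u) ∣ ℓ := orderOf_dvd_of_pow_eq_one hw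
  have hord2 : orderOf (-u) ∣ p - 1 := by
    have := orderOf_dvd_card (x := -u)
    rwa [ZMod.card_units] at this
  have hdg : orderOf (-u) ∣ 1 := hgcd ▸ Nat.dvd_gcd hord1 hord2
  have hw1 : -u = 1 := orderOf_eq_one_iff.mp (Nat.dvd_one.mp hdg)
  have hu1 : u = -1 := by rw [← neg_neg u, hw1]
  have hbval : (a : ZMod p) = -1 := by rw [← hu, hu1]; simp
  have hdvd2 : p ∣ a + 1 := by
    rw [← ZMod.natCast_eq_zero_iff]
    push_cast
    rw [hbval]; ring
  obtain ⟨c, hc⟩ := hdvd2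
  have hppos : 0 < p := hp.pos
  have hc1 : c ≠ 0 := by rintro rfl; omega
  have hc2 : c < 2 := by
    by_contra hcc
    push_neg at hcc
    nlinarith
  interval_cases c <;> omega

private lemma case_main (ℓ n p : ℕ) (hℓpos : 0 < ℓ) (hℓodd : Odd ℓ) (hn : 3 ≤ n)
    (hp : p.Prime) (h2p : n + 1 < 2 * p) (hpn : p ≤ n + 1)
    (hpow : IsPowerful (Omega ℓ n)) (hgcd : Nat.Coprime ℓ (p - 1)) : p ∣ ℓ := by
  haveI : Fact p.Prime := ⟨hp⟩
  have hp3 : 3 ≤ p := by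
    rcases hp.two_le.lt_or_eq with h | h
    · omega
    · omega
  have hmem : p - 1 ∈ Finset.Icc 1 n := by
    rw [Finset.mem_Icc]; omega
  have hdvd1 : p ∣ (p - 1) ^ ℓ + 1 := by
    rw [← ZMod.natCast_eq_zero_iff]
    push_cast [Nat.cast_sub hp.one_le]
    rw [ZMod.natCast_self]
    rw [show ((0 : ZMod p) - 1) = -1 by ring, hℓodd.neg_one_pow]
    ring
  have hdvdΩ : p ∣ Omega ℓ n :=
    hdvd1.trans (Finset.dvd_prod_of_mem (fun a => a ^ ℓ + 1) hmem)
  have hsq : p ^ 2 ∣ Omega ℓ n := hpow p hp hdvdΩ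
  have hsplit : Omega ℓ n = ((p - 1) ^ ℓ + 1) *
      ∏ a ∈ (Finset.Icc 1 n).erase (p - 1), (a ^ ℓ + 1) := by
    rw [Omega, ← Finset.mul_prod_erase _ _ hmem]
  have hcop : Nat.Coprime p (∏ a ∈ (Finset.Icc 1 n).erase (p - 1), (a ^ ℓ + 1)) := by
    apply Nat.Coprime.prod_right
    intro a hamem
    rw [hp.coprime_iff_not_dvd]
    intro hda
    have hane := Finset.ne_of_mem_erase hamem
    have hain := Finset.mem_of_mem_erase hamem
    rw [Finset.mem_Icc] at hain
    exact hane (unique_sol p ℓ n a hp hℓodd hgcd hain.1 hain.2 h2p hda)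
  have hcop2 : Nat.Coprime (p ^ 2)
      (∏ a ∈ (Finset.Icc 1 n).erase (p - 1), (a ^ ℓ + 1)) := hcop.pow_left 2
  have hfinal : p ^ 2 ∣ (p - 1) ^ ℓ + 1 := by
    apply hcop2.dvd_of_dvd_mul_right
    rw [← hsplit]; exact hsq
  exact key_dvd p ℓ hp.one_le hℓodd hfinal

theorem stmt_4 (ℓ n k : ℕ) (hℓpos : 0 < ℓ) (hℓodd : Odd ℓ) (hn : 3 ≤ n)
    (p : Fin k → ℕ) (hinj : Function.Injective p)
    (hprime : ∀ i, (p i).Prime)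
    (hrange : ∀ i, n + 1 < 2 * p i ∧ p i ≤ n + 1)
    (hcop : ∀ i j, i ≠ j → ∀ q : ℕ, q.Prime → Odd q →
      q ∣ p i - 1 → ¬ q ∣ p j - 1)
    (hpow : IsPowerful (Omega ℓ n)) :
    k ≤ ℓ.primeFactors.card := by
  have hp3 : ∀ i, 3 ≤ p i := by
    intro i
    have := (hprime i).two_le
    have := (hrange i).1
    omega
  have hkey : ∀ i : Fin k, ∃ q : ℕ, q.Prime ∧ q ∣ ℓ ∧
      (q = p i ∨ (Odd q ∧ q ∣ p i - 1)) := by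
    intro i
    by_cases hdl : p i ∣ ℓ
    · exact ⟨p i, hprime i, hdl, Or.inl rfl⟩
    · have hnc : ¬ Nat.Coprime ℓ (p i - 1) := fun hc =>
        hdl (case_main ℓ n (p i) hℓpos hℓodd hn (hprime i)
          (hrange i).1 (hrange i).2 hpow hc)
      have hg1 : Nat.gcd ℓ (p i - 1) ≠ 1 := hnc
      obtain ⟨q, hq, hqd⟩ := Nat.exists_prime_and_dvd hg1
      have hqℓ : q ∣ ℓ := hqd.trans (Nat.gcd_dvd_left _ _)
      have hqp : q ∣ p i - 1 := hqd.trans (Nat.gcd_dvd_right _ _)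
      have hqodd : Odd q := by
        refine hq.odd_of_ne_two ?_
        rintro rfl
        obtain ⟨c, hc⟩ := hqℓ
        obtain ⟨m0, hm0⟩ := hℓodd
        omega
      exact ⟨q, hq, hqℓ, Or.inr ⟨hqodd, hqp⟩⟩
  choose g hg1 hg2 hg3 using hkey
  have hsmall : ∀ i : Fin k, ∀ q : ℕ, Odd q → q ∣ p i - 1 → 2 * q ≤ n := by
    intro i q hqo hqd
    have hpodd : Odd (p i) := (hprime i).odd_of_ne_two (by have := hp3 i; omega)
    have h2d : 2 ∣ p i - 1 := by
      obtain ⟨t, ht⟩ := hpodd; omega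
    have hcp : Nat.Coprime 2 q := (Nat.prime_two.coprime_iff_not_dvd).mpr
      (by obtain ⟨t, ht⟩ := hqo; omega)
    have hmul : 2 * q ∣ p i - 1 := hcp.mul_dvd_of_dvd_of_dvd h2d hqd
    have hle : 2 * q ≤ p i - 1 := Nat.le_of_dvd (by have := hp3 i; omega) hmul
    have := (hrange i).2
    omega
  have hginj : Function.Injective g := by
    intro i j hij
    by_contra hne
    rcases hg3 i with hi | ⟨hio, hid⟩ <;> rcases hg3 j with hj | ⟨hjo, hjd⟩
    · exact hne (hinj (hi ▸ hj ▸ hij))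
    · have h1 : 2 * g j ≤ n := hsmall j (g j) hjo hjd
      have h2 := (hrange i).1
      omega
    · have h1 : 2 * g i ≤ n := hsmall i (g i) hio hid
      have h2 := (hrange j).1
      omega
    · exact hcop i j hne (g i) (hg1 i) hio hid (hij ▸ hjd)
  have hmaps : ∀ i : Fin k, g i ∈ ℓ.primeFactors := by
    intro i
    exact Nat.mem_primeFactors.mpr ⟨hg1 i, hg2 i, by omega⟩
  calc k = (Finset.univ : Finset (Fin k)).card := by simp
    _ ≤ ℓ.primeFactors.card :=
        Finset.card_le_card_of_injOn g (fun i _ => hmaps i)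
          (Function.Injective.injOn hginj)
end

section
/- Let ℓ be a positive odd integer with at most t distinct prime factors. Suppose there exist t+1 primes p₁ < p₂ < ⋯ < p_{t+1} with p₁ ≥ 3 such that for any two indices i ≠ j, the numbers pᵢ − 1 and p_j − 1 have no common odd prime factor. Then for every integer n with p_{t+1} − 1 ≤ n ≤ 2p₁ − 2, the product Ω_ℓ(n) = (1^ℓ+1)(2^ℓ+1)···(n^ℓ+1) is not a powerful number. -/
-- binomial with nilpotent
lemma nilp_pow {R : Type*} [CommRing R] (ε : R) (hε : ε^2 = 0) (m : ℕ) :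
    (ε - 1)^m = (-1)^m * (1 - m * ε) := by
  induction m with
  | zero => simp
  | succ k ih =>
    rw [pow_succ, ih]
    push_cast
    linear_combination ((-1:R)^k * (-(k:R))) * hε

lemma key2 (p ℓ : ℕ) (hp : p.Prime) (hℓodd : Odd ℓ) (hpl : ¬ p ∣ ℓ) :
    ¬ p^2 ∣ (p-1)^ℓ + 1 := by
  intro h
  have hp1 : 1 ≤ p := hp.one_lt.le.trans' (by norm_num)
  have h0 : ((((p-1)^ℓ + 1 : ℕ)) : ZMod (p^2)) = 0 :=
    (ZMod.natCast_eq_zero_iff _ _).mpr h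
  have hcast : (((p-1 : ℕ)) : ZMod (p^2)) = (p : ZMod (p^2)) - 1 := by
    push_cast [Nat.cast_sub hp1]; ring
  have hε : (p : ZMod (p^2))^2 = 0 := by
    have : (((p^2 : ℕ)) : ZMod (p^2)) = 0 := ZMod.natCast_self _
    push_cast at this
    exact this
  rw [Nat.cast_add, Nat.cast_pow, hcast, Nat.cast_one,
    nilp_pow _ hε, hℓodd.neg_one_pow] at h0
  have h1 : (((ℓ * p : ℕ)) : ZMod (p^2)) = 0 := by
    push_cast
    linear_combination h0
  have h2 : p^2 ∣ ℓ * p := (ZMod.natCast_eq_zero_iff _ _).mp h1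
  rw [pow_two] at h2
  exact hpl ((Nat.mul_dvd_mul_iff_right hp.pos).mp h2)

lemma zmod_root (p ℓ : ℕ) [hpf : Fact p.Prime] (hℓ : 0 < ℓ) (hℓodd : Odd ℓ)
    (hcop : Nat.Coprime (p - 1) ℓ) (x : ZMod p) (hx : x ^ ℓ = -1) : x = -1 := by
  have hx0 : x ≠ 0 := by
    intro h
    rw [h, zero_pow hℓ.ne'] at hx
    exact one_ne_zero (neg_eq_zero.mp hx.symm)
  have hcard : (Nat.card (ZMod p)ˣ).Coprime ℓ := by
    rwa [Nat.card_eq_fintype_card, ZMod.card_units]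
  have hu := (Ne.isUnit hx0)
  have huv : ((hu.unit : (ZMod p)ˣ) : ZMod p) = x := hu.unit_spec
  have hpow : hu.unit ^ ℓ = (-1 : (ZMod p)ˣ) := by
    apply Units.ext
    rw [Units.val_pow_eq_pow_val, huv, hx]
    simp
  have : hu.unit = (-1 : (ZMod p)ˣ) := by
    apply (powCoprime hcard).injective
    rw [powCoprime_apply, powCoprime_apply, hpow, hℓodd.neg_one_pow]
  rw [← huv, this]
  simp

theorem stmt_5 (ℓ t : ℕ) (hℓpos : 0 < ℓ) (hℓodd : Odd ℓ)
    (hfac : ℓ.primeFactors.card ≤ t)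
    (p : Fin (t + 1) → ℕ) (hmono : StrictMono p)
    (hprime : ∀ i, (p i).Prime) (h3 : 3 ≤ p 0)
    (hcop : ∀ i j, i ≠ j → ∀ q : ℕ, q.Prime → Odd q →
      q ∣ p i - 1 → ¬ q ∣ p j - 1)
    (n : ℕ) (hlow : p (Fin.last t) - 1 ≤ n) (hhigh : n ≤ 2 * p 0 - 2) :
    ¬ IsPowerful (Omega ℓ n) := by
  intro hpow
  have hplast : ∀ i, p i ≤ p (Fin.last t) := fun i => hmono.monotone (Fin.le_last i)
  have hp0 : ∀ i, p 0 ≤ p i := fun i => hmono.monotone (Fin.zero_le i)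
  have hexists : ∃ i : Fin (t+1), ∀ q ∈ ℓ.primeFactors, ¬ q ∣ p i - 1 ∧ q ≠ p i := by
    by_contra hall
    push_neg at hall
    choose f hf1 hf2 using hall
    have hfdvd : ∀ i, f i ∣ ℓ := fun i => Nat.dvd_of_mem_primeFactors (hf1 i)
    have hfprime : ∀ i, (f i).Prime := fun i => Nat.prime_of_mem_primeFactors (hf1 i)
    have hfodd : ∀ i, Odd (f i) := by
      intro i
      rcases Nat.even_or_odd (f i) with he | ho
      · exfalso
        have h2 : 2 ∣ ℓ := dvd_trans (Even.two_dvd he) (hfdvd i)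
        rw [← Nat.not_even_iff_odd] at hℓodd
        exact hℓodd ((even_iff_two_dvd).mpr h2)
      · exact ho
    have hpodd : ∀ i, Odd (p i) :=
      fun i => (hprime i).odd_of_ne_two (by have := hp0 i; omega)
    -- helper for the mixed case
    have hmix : ∀ a b : Fin (t+1), f a = f b → f a ∣ p a - 1 → f b = p b → False := by
      intro a b hab hda hb
      have hdvd : p b ∣ p a - 1 := by rw [← hb, ← hab]; exact hda
      have h2d : 2 ∣ p a - 1 := by
        have := (hpodd a)
        rw [Nat.odd_iff] at this
        omega
      have hco : Nat.Coprime 2 (p b) := (hpodd b).coprime_two_left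
      have h2p : 2 * p b ∣ p a - 1 := hco.mul_dvd_of_dvd_of_dvd h2d hdvd
      have hle : 2 * p b ≤ p a - 1 := Nat.le_of_dvd (by have := hp0 a; omega) h2p
      have h1 := hp0 a
      have h2 := hp0 b
      have h3' := hplast a
      omega
    have hinj : Function.Injective f := by
      intro i j hij
      by_contra hne
      rcases Classical.em (f i ∣ p i - 1) with hdi | hdi
      · rcases Classical.em (f j ∣ p j - 1) with hdj | hdj
        · exact hcop i j hne (f i) (hfprime i) (hfodd i) hdi (hij ▸ hdj)
        · exact hmix i j hij hdi (hf2 j hdj)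
      · rcases Classical.em (f j ∣ p j - 1) with hdj | hdj
        · exact hmix j i hij.symm hdj (hf2 i hdi)
        · exact hne (hmono.injective (by rw [← hf2 i hdi, ← hf2 j hdj, hij]))
    have hcard := Finset.card_le_card_of_injOn (s := Finset.univ) f (fun i _ => hf1 i) hinj.injOn
    simp only [Finset.card_univ, Fintype.card_fin] at hcard
    omega
  obtain ⟨i, hgood⟩ := hexists
  obtain ⟨P, hPdef⟩ : ∃ P, p i = P := ⟨_, rfl⟩
  have hPp : P.Prime := hPdef ▸ hprime i
  haveI : Fact P.Prime := ⟨hPp⟩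
  have hgood' : ∀ q ∈ ℓ.primeFactors, ¬ q ∣ P - 1 ∧ q ≠ P := hPdef ▸ hgood
  have h3P : 3 ≤ P := hPdef ▸ le_trans h3 (hp0 i)
  have hPn : P - 1 ≤ n := by
    have h := hplast i; rw [hPdef] at h; omega
  have hn2P : n < 2 * P - 1 := by
    have h := hp0 i; rw [hPdef] at h; omega
  have hcopP : Nat.Coprime (P - 1) ℓ := by
    by_contra hg
    have hq := Nat.minFac_prime hg
    have hq1 : (Nat.gcd (P-1) ℓ).minFac ∣ P - 1 :=
      dvd_trans (Nat.minFac_dvd _) (Nat.gcd_dvd_left _ _)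
    have hq2 : (Nat.gcd (P-1) ℓ).minFac ∣ ℓ :=
      dvd_trans (Nat.minFac_dvd _) (Nat.gcd_dvd_right _ _)
    exact (hgood' _ (Nat.mem_primeFactors.mpr ⟨hq, hq2, hℓpos.ne'⟩)).1 hq1
  have hPl : ¬ P ∣ ℓ := fun hd =>
    (hgood' P (Nat.mem_primeFactors.mpr ⟨hPp, hd, hℓpos.ne'⟩)).2 rfl
  have hmem : P - 1 ∈ Finset.Icc 1 n := Finset.mem_Icc.mpr ⟨by omega, hPn⟩
  have honly : ∀ a ∈ Finset.Icc 1 n, P ∣ a ^ ℓ + 1 → a = P - 1 := by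
    intro a ha hdvd
    have ha' := Finset.mem_Icc.mp ha
    have h0 : ((a : ZMod P)) ^ ℓ = -1 := by
      have hz : (((a ^ ℓ + 1 : ℕ)) : ZMod P) = 0 :=
        (ZMod.natCast_eq_zero_iff _ _).mpr hdvd
      push_cast at hz
      linear_combination hz
    have hroot := zmod_root P ℓ hℓpos hℓodd hcopP _ h0
    have hz2 : (((a + 1 : ℕ)) : ZMod P) = 0 := by
      push_cast
      rw [hroot]; ring
    obtain ⟨k, hk⟩ := (ZMod.natCast_eq_zero_iff _ _).mp hz2
    rcases k with _ | _ | k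
    · simp at hk
    · simp at hk; omega
    · exfalso
      have h2k : P * 2 ≤ P * (k + 1 + 1) := Nat.mul_le_mul_left _ (by omega)
      omega
  have hPfac : P ∣ (P-1)^ℓ + 1 := by
    have hc : (((P - 1 : ℕ)) : ZMod P) = -1 := by
      have hz : (((P - 1 + 1 : ℕ)) : ZMod P) = 0 := by
        rw [show P - 1 + 1 = P by omega]; exact ZMod.natCast_self P
      push_cast at hz
      linear_combination hz
    have : ((((P-1)^ℓ + 1 : ℕ)) : ZMod P) = 0 := by
      rw [Nat.cast_add, Nat.cast_pow, hc, Nat.cast_one, hℓodd.neg_one_pow]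
      ring
    exact (ZMod.natCast_eq_zero_iff _ _).mp this
  have hsplit : Omega ℓ n = ((P-1)^ℓ + 1) * ∏ a ∈ (Finset.Icc 1 n).erase (P-1), (a^ℓ+1) := by
    simp only [Omega]
    exact (Finset.mul_prod_erase _ _ hmem).symm
  have hPOmega : P ∣ Omega ℓ n := by
    rw [hsplit]; exact Dvd.dvd.mul_right hPfac _
  have hsq := hpow P hPp hPOmega
  have hrest : ¬ P ∣ ∏ a ∈ (Finset.Icc 1 n).erase (P-1), (a^ℓ+1) := by
    intro hd
    obtain ⟨a, ha, hda⟩ := ((Nat.Prime.prime hPp).dvd_finset_prod_iff _).mp hd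
    exact (Finset.ne_of_mem_erase ha) (honly a (Finset.mem_of_mem_erase ha) hda)
  have hc2 : Nat.Coprime (P^2) (∏ a ∈ (Finset.Icc 1 n).erase (P-1), (a^ℓ+1)) :=
    (((Nat.Prime.coprime_iff_not_dvd hPp).mpr hrest)).pow_left _
  rw [hsplit] at hsq
  exact key2 P ℓ hPp hℓodd hPl (hc2.dvd_of_dvd_mul_right hsq)
end

section
/- Let ℓ be a positive odd integer, p an odd prime, and n a positive integer such that p² divides Ω_ℓ(n) = (1^ℓ+1)(2^ℓ+1)···(n^ℓ+1). Suppose there exist a divisor d₁ of ℓ and an integer a with 2 ≤ a ≤ n such that p divides a^{d₁} + 1 but p² does not divide a^{d₁} + 1, and such that for every integer b with 2 ≤ b ≤ n and b ≠ a, p does not divide b^{gcd(ℓ, p−1)} + 1. Then p divides ℓ. -/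
/-- If `p ∣ b^ℓ + 1` with `ℓ` odd and `p` an odd prime, then `p ∣ b^(gcd ℓ (p-1)) + 1`. -/
lemma aux_gcd (p ℓ b : ℕ) (hp : p.Prime) (hpodd : Odd p) (hℓodd : Odd ℓ)
    (hdvd : p ∣ b ^ ℓ + 1) : p ∣ b ^ Nat.gcd ℓ (p - 1) + 1 := by
  haveI : Fact p.Prime := ⟨hp⟩
  have hb0 : (b : ZMod p) ^ ℓ = -1 := by
    have : ((b ^ ℓ + 1 : ℕ) : ZMod p) = 0 := by
      rw [ZMod.natCast_eq_zero_iff]; exact hdvd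
    push_cast at this
    linear_combination this
  have hbne : (b : ZMod p) ≠ 0 := by
    intro h
    rw [h, zero_pow hℓodd.pos.ne'] at hb0
    exact one_ne_zero (neg_eq_zero.mp hb0.symm)
  have hbu : IsUnit (b : ZMod p) := isUnit_iff_ne_zero.mpr hbne
  set B : (ZMod p)ˣ := hbu.unit with hB
  have hBcoe : (B : ZMod p) = (b : ZMod p) := hbu.unit_spec
  have hBl : B ^ ℓ = -1 := by
    apply Units.ext
    rw [Units.val_pow_eq_pow_val, hBcoe, hb0]; rfl
  have hBp : B ^ (p - 1) = 1 := ZMod.units_pow_card_sub_one_eq_one p B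
  -- Bezout
  set g := Nat.gcd ℓ (p - 1) with hg
  have hbez := Nat.gcd_eq_gcd_ab ℓ (p - 1)
  set u := Nat.gcdA ℓ (p - 1)
  set v := Nat.gcdB ℓ (p - 1)
  have hgodd : Odd g := hℓodd.of_dvd_nat (Nat.gcd_dvd_left _ _)
  have hpeven : Even (((p - 1 : ℕ)) : ℤ) := by
    obtain ⟨k, hk⟩ := hpodd
    refine ⟨k, ?_⟩
    have : p - 1 = k + k := by omega
    push_cast [this]; ring
  have huodd : Odd u := by
    rcases Int.even_or_odd u with he | ho
    · exfalso
      have : Even (g : ℤ) := by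
        rw [hbez]
        exact Even.add (he.mul_left _) (hpeven.mul_right _)
      have : Even g := by rwa [Int.even_coe_nat] at this
      exact (Nat.not_even_iff_odd.mpr hgodd) this
    · exact ho
  have hBg : B ^ (g : ℤ) = -1 := by
    rw [hbez, zpow_add, zpow_mul, zpow_mul]
    rw [zpow_natCast, zpow_natCast, hBl, hBp, one_zpow, mul_one]
    apply Units.ext
    rw [Units.val_zpow_eq_zpow_val, Units.val_neg, Units.val_one]
    exact Odd.neg_one_zpow huodd
  have hBg' : B ^ g = -1 := by rw [← zpow_natCast, hBg]
  have hcast : ((b ^ g + 1 : ℕ) : ZMod p) = 0 := by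
    have : (b : ZMod p) ^ g = -1 := by
      rw [← hBcoe, ← Units.val_pow_eq_pow_val, hBg']; rfl
    push_cast
    rw [this]; ring
  rwa [ZMod.natCast_eq_zero_iff] at hcast

theorem stmt_7 (ℓ p n : ℕ) (hℓpos : 0 < ℓ) (hℓodd : Odd ℓ)
    (hp : p.Prime) (hpodd : Odd p) (hn : 0 < n)
    (hpow : p ^ 2 ∣ Omega ℓ n)
    (d₁ a : ℕ) (hd₁ : d₁ ∣ ℓ) (ha2 : 2 ≤ a) (han : a ≤ n)
    (hexact : p ∣ a ^ d₁ + 1 ∧ ¬ p ^ 2 ∣ a ^ d₁ + 1)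
    (hb : ∀ b : ℕ, 2 ≤ b → b ≤ n → b ≠ a → ¬ p ∣ b ^ Nat.gcd ℓ (p - 1) + 1) :
    p ∣ ℓ := by
  haveI : Fact p.Prime := ⟨hp⟩
  obtain ⟨hpa, hpa2⟩ := hexact
  have hp2 : p ≠ 2 := by rintro rfl; exact (Nat.not_odd_iff_even.mpr even_two) hpodd
  have hpne2 : ¬ p ∣ 2 := fun h => hp2 ((Nat.prime_dvd_prime_iff_eq hp Nat.prime_two).mp h)
  -- d₁ positive, m := ℓ/d₁ odd
  obtain ⟨m, hm⟩ := hd₁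
  have hmodd : Odd m := by rw [hm, Nat.odd_mul] at hℓodd; exact hℓodd.2
  -- p ∤ a^d₁
  have hpx : ¬ p ∣ a ^ d₁ := by
    intro h
    have : p ∣ 1 := (Nat.dvd_add_right h).mp hpa
    exact hp.ne_one (Nat.dvd_one.mp this)
  -- only the factor at a is divisible by p
  have honly : ∀ b ∈ (Finset.Icc 1 n).erase a, ¬ p ∣ b ^ ℓ + 1 := by
    intro b hbmem hpb
    rw [Finset.mem_erase, Finset.mem_Icc] at hbmem
    obtain ⟨hbne, hb1, hbn⟩ := hbmem
    rcases Nat.lt_or_ge b 2 with h2 | h2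
    · interval_cases b
      simp only [one_pow] at hpb
      exact hpne2 hpb
    · exact hb b h2 hbn hbne (aux_gcd p ℓ b hp hpodd hℓodd hpb)
  -- split the product
  have hamem : a ∈ Finset.Icc 1 n := Finset.mem_Icc.mpr ⟨le_trans one_le_two ha2, han⟩
  have hsplit : Omega ℓ n = (a ^ ℓ + 1) * ∏ b ∈ (Finset.Icc 1 n).erase a, (b ^ ℓ + 1) :=
    (Finset.mul_prod_erase _ _ hamem).symm
  have hrest : ¬ p ∣ ∏ b ∈ (Finset.Icc 1 n).erase a, (b ^ ℓ + 1) := by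
    intro h
    obtain ⟨b, hbmem, hbdvd⟩ := hp.prime.exists_mem_finset_dvd h
    exact honly b hbmem hbdvd
  have hp2a : p ^ 2 ∣ a ^ ℓ + 1 := by
    have hcop : Nat.Coprime (p ^ 2) (∏ b ∈ (Finset.Icc 1 n).erase a, (b ^ ℓ + 1)) :=
      ((Nat.Prime.coprime_iff_not_dvd hp).mpr hrest).pow_left 2
    exact hcop.dvd_of_dvd_mul_right (hsplit ▸ hpow)
  -- lifting the exponent
  have hlte : padicValNat p ((a ^ d₁) ^ m + 1 ^ m)
      = padicValNat p (a ^ d₁ + 1) + padicValNat p m := by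
    refine padicValNat.pow_add_pow hpodd ?_ hpx hmodd
    simpa using hpa
  rw [one_pow, ← pow_mul, ← hm] at hlte
  have hne : a ^ d₁ + 1 ≠ 0 := by positivity
  have hv1 : padicValNat p (a ^ d₁ + 1) = 1 := by
    have h1 : 1 ≤ padicValNat p (a ^ d₁ + 1) := by
      rw [← padicValNat_dvd_iff_le hne, pow_one]; exact hpa
    have h2 : ¬ 2 ≤ padicValNat p (a ^ d₁ + 1) := by
      rw [← padicValNat_dvd_iff_le hne]; exact hpa2
    omega
  have hv2 : 2 ≤ padicValNat p (a ^ ℓ + 1) := by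
    rw [← padicValNat_dvd_iff_le (by positivity)]; exact hp2a
  have hvm : 1 ≤ padicValNat p m := by omega
  have hpm : p ∣ m := by
    calc p = p ^ 1 := (pow_one p).symm
    _ ∣ p ^ padicValNat p m := pow_dvd_pow p hvm
    _ ∣ m := pow_padicValNat_dvd
  exact hm ▸ Dvd.dvd.mul_left hpm d₁
end

section
/- Let ℓ be a positive odd integer with at most two distinct prime factors. Then for every integer n with 22 ≤ n ≤ 476, the product Ω_ℓ(n) = (1^ℓ+1)(2^ℓ+1)···(n^ℓ+1) is not a powerful number. -/
lemma pow_mod_sq (y : ℤ) : ∀ n : ℕ, (y - 1) ^ n ≡ (-1) ^ n + n * (-1) ^ (n + 1) * y [ZMOD y ^ 2]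
  | 0 => by simp
  | n + 1 => by
    have ih := pow_mod_sq y n
    calc (y - 1) ^ (n+1) = (y-1)^n * (y-1) := by ring
    _ ≡ ((-1) ^ n + n * (-1) ^ (n + 1) * y) * (y-1) [ZMOD y^2] := ih.mul_right _
    _ ≡ (-1) ^ (n+1) + (↑(n+1)) * (-1) ^ (n + 2) * y [ZMOD y^2] :=
        Int.ModEq.symm (Int.modEq_iff_dvd.mpr ⟨(n : ℤ) * (-1)^(n+1), by push_cast; ring⟩)

lemma key (p ℓ n : ℕ) (hp : p.Prime) (hp2 : p ≠ 2) (hℓodd : Odd ℓ)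
    (hcop : Nat.Coprime (p * (p - 1)) ℓ) (h1 : p - 1 ≤ n) (h2 : n ≤ 2 * p - 2) :
    ¬ IsPowerful (Omega ℓ n) := by
  have hp3 : 3 ≤ p := (hp.two_le).lt_of_ne (Ne.symm hp2)
  have hℓpos : 0 < ℓ := hℓodd.pos
  have hcp1 : Nat.Coprime p ℓ := Nat.Coprime.coprime_dvd_left ⟨p - 1, rfl⟩ hcop
  have hcp2 : Nat.Coprime (p - 1) ℓ := Nat.Coprime.coprime_dvd_left ⟨p, mul_comm _ _⟩ hcop
  -- the special factor
  set F : ℕ := (p - 1) ^ ℓ + 1 with hF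
  have hmem : p - 1 ∈ Finset.Icc 1 n := Finset.mem_Icc.mpr ⟨by omega, h1⟩
  -- p ∣ F
  have hcast : ((p - 1 : ℕ) : ZMod p) = -1 := by
    have : ((p - 1 : ℕ) : ZMod p) = (p : ZMod p) - 1 := by
      push_cast [Nat.cast_sub (by omega : 1 ≤ p)]; ring
    simp [this]
  have hpF : p ∣ F := by
    have : ((F : ℕ) : ZMod p) = 0 := by
      push_cast [hF, hcast, hℓodd.neg_one_pow]; ring
    exact (ZMod.natCast_eq_zero_iff _ _).mp this
  -- p² ∤ F
  have hpF2 : ¬ p ^ 2 ∣ F := by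
    intro hdvd
    have hmod := pow_mod_sq (p : ℤ) ℓ
    rw [hℓodd.neg_one_pow, (by omega : ℓ + 1 = ℓ + 1), Even.neg_one_pow (by
      rcases hℓodd with ⟨k, hk⟩; exact ⟨k + 1, by omega⟩)] at hmod
    -- hmod : ((p:ℤ) - 1) ^ ℓ ≡ -1 + ℓ * 1 * p [ZMOD p^2]
    have hdvdZ : ((p : ℤ)) ^ 2 ∣ ((p : ℤ) - 1) ^ ℓ + 1 := by
      have : ((p : ℤ) - 1) ^ ℓ + 1 = ((F : ℕ) : ℤ) := by
        push_cast [hF, Nat.cast_sub (by omega : 1 ≤ p)]; ring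
      rw [this]
      exact_mod_cast Int.natCast_dvd_natCast.mpr (by exact_mod_cast hdvd)
    have hint : ((p : ℤ)) ^ 2 ∣ (ℓ : ℤ) * p := by
      have h3 : ((p : ℤ)) ^ 2 ∣ ((-1 + (ℓ:ℤ) * 1 * p) - ((p : ℤ) - 1) ^ ℓ) := Int.ModEq.dvd hmod
      have h4 := dvd_add h3 hdvdZ
      have h5 : ((-1 + (ℓ:ℤ) * 1 * p) - ((p : ℤ) - 1) ^ ℓ) + (((p : ℤ) - 1) ^ ℓ + 1) = (ℓ:ℤ) * p := by ring
      rwa [h5] at h4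
    have hN : p ^ 2 ∣ ℓ * p := by exact_mod_cast hint
    have hpl : p ∣ ℓ := by
      refine (Nat.mul_dvd_mul_iff_right hp.pos).mp ?_
      rwa [← pow_two]
    have := Nat.Coprime.eq_one_of_dvd hcp1 hpl
    omega
  haveI := Fact.mk hp
  -- only the factor at a = p-1 is divisible by p
  have huniq : ∀ a ∈ Finset.Icc 1 n, a ≠ p - 1 → ¬ p ∣ a ^ ℓ + 1 := by
    intro a ha hane hdvd
    have h0 : ((a : ZMod p)) ^ ℓ = -1 := by
      have h' : ((a ^ ℓ + 1 : ℕ) : ZMod p) = 0 := (ZMod.natCast_eq_zero_iff _ _).mpr hdvd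
      push_cast at h'
      exact eq_neg_of_add_eq_zero_left h'
    have hne : (-(a : ZMod p)) ≠ 0 := by
      intro h
      have ha0 : (a : ZMod p) = 0 := by simpa using h
      rw [ha0, zero_pow hℓpos.ne'] at h0
      rw [eq_comm, neg_eq_zero] at h0
      exact one_ne_zero h0
    have hpow1 : (-(a : ZMod p)) ^ ℓ = 1 := by
      rw [neg_pow, h0, hℓodd.neg_one_pow]; ring
    have hord1 : orderOf (-(a : ZMod p)) ∣ ℓ := orderOf_dvd_of_pow_eq_one hpow1
    have hord2 : orderOf (-(a : ZMod p)) ∣ p - 1 := by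
      have := ZMod.pow_card_sub_one_eq_one hne
      have h2 := orderOf_dvd_of_pow_eq_one this
      simpa [ZMod.card] using h2
    have hord : orderOf (-(a : ZMod p)) = 1 :=
      Nat.eq_one_of_dvd_coprimes hcp2 hord2 hord1
    have hval : (-(a : ZMod p)) = 1 := orderOf_eq_one_iff.mp hord
    have hcasta : ((a : ℕ) : ZMod p) = ((p - 1 : ℕ) : ZMod p) := by
      rw [hcast]
      linear_combination -hval
    have hmodeq : a ≡ p - 1 [MOD p] := (ZMod.natCast_eq_natCast_iff _ _ _).mp hcasta
    have hmo : a % p = p - 1 := by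
      have : (p - 1) % p = p - 1 := Nat.mod_eq_of_lt (by omega)
      rw [Nat.ModEq] at hmodeq
      omega
    rw [Finset.mem_Icc] at ha
    rcases Nat.lt_or_ge a p with hcase | hcase
    · have : a % p = a := Nat.mod_eq_of_lt hcase
      omega
    · have h7 : a - p < p := by omega
      have h8 : a % p = (a - p) % p := Nat.mod_eq_sub_mod hcase
      rw [Nat.mod_eq_of_lt h7] at h8
      omega
  -- assemble
  intro hpow
  have hFdvd : F ∣ Omega ℓ n := Finset.dvd_prod_of_mem _ hmem
  have hpO : p ∣ Omega ℓ n := hpF.trans hFdvd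
  have hp2O := hpow p hp hpO
  have hsplit : Omega ℓ n = F * ∏ a ∈ (Finset.Icc 1 n).erase (p - 1), (a ^ ℓ + 1) :=
    (Finset.mul_prod_erase _ _ hmem).symm
  have hpR : ¬ p ∣ ∏ a ∈ (Finset.Icc 1 n).erase (p - 1), (a ^ ℓ + 1) := by
    intro h
    obtain ⟨a, ha, hd⟩ := (hp.prime.dvd_finset_prod_iff _).mp h
    exact huniq a (Finset.mem_of_mem_erase ha) (Finset.ne_of_mem_erase ha) hd
  have hcopr : Nat.Coprime (p ^ 2) (∏ a ∈ (Finset.Icc 1 n).erase (p - 1), (a ^ ℓ + 1)) :=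
    Nat.Coprime.pow_left 2 ((Nat.Prime.coprime_iff_not_dvd hp).mpr hpR)
  have hfin : p ^ 2 ∣ F := Nat.Coprime.dvd_of_dvd_mul_right hcopr (hsplit ▸ hp2O)
  exact hpF2 hfin

lemma key2_s16 (p₁ p₂ p₃ ℓ n : ℕ) (h1 : p₁.Prime) (h2 : p₂.Prime) (h3 : p₃.Prime)
    (o1 : p₁ ≠ 2) (o2 : p₂ ≠ 2) (o3 : p₃ ≠ 2)
    (hord : p₁ ≤ p₂ ∧ p₂ ≤ p₃)
    (g12 : ∃ k, Nat.gcd (p₁ * (p₁ - 1)) (p₂ * (p₂ - 1)) = 2 ^ k)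
    (g13 : ∃ k, Nat.gcd (p₁ * (p₁ - 1)) (p₃ * (p₃ - 1)) = 2 ^ k)
    (g23 : ∃ k, Nat.gcd (p₂ * (p₂ - 1)) (p₃ * (p₃ - 1)) = 2 ^ k)
    (hℓodd : Odd ℓ) (hfac : ℓ.primeFactors.card ≤ 2)
    (hn1 : p₃ - 1 ≤ n) (hn2 : n ≤ 2 * p₁ - 2) :
    ¬ IsPowerful (Omega ℓ n) := by
  have hℓpos : 0 < ℓ := hℓodd.pos
  -- if some pᵢ works, apply key
  by_cases c1 : Nat.Coprime (p₁ * (p₁ - 1)) ℓ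
  · exact key p₁ ℓ n h1 o1 hℓodd c1 (by omega) (by omega)
  by_cases c2 : Nat.Coprime (p₂ * (p₂ - 1)) ℓ
  · exact key p₂ ℓ n h2 o2 hℓodd c2 (by omega) (by omega)
  by_cases c3 : Nat.Coprime (p₃ * (p₃ - 1)) ℓ
  · exact key p₃ ℓ n h3 o3 hℓodd c3 (by omega) (by omega)
  -- otherwise ℓ has ≥ 3 prime factors, contradiction
  exfalso
  obtain ⟨q₁, hq1, hq1d⟩ := Nat.exists_prime_and_dvd c1
  obtain ⟨q₂, hq2, hq2d⟩ := Nat.exists_prime_and_dvd c2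
  obtain ⟨q₃, hq3, hq3d⟩ := Nat.exists_prime_and_dvd c3
  have d1N : q₁ ∣ p₁ * (p₁ - 1) := hq1d.trans (Nat.gcd_dvd_left _ _)
  have d2N : q₂ ∣ p₂ * (p₂ - 1) := hq2d.trans (Nat.gcd_dvd_left _ _)
  have d3N : q₃ ∣ p₃ * (p₃ - 1) := hq3d.trans (Nat.gcd_dvd_left _ _)
  have d1l : q₁ ∣ ℓ := hq1d.trans (Nat.gcd_dvd_right _ _)
  have d2l : q₂ ∣ ℓ := hq2d.trans (Nat.gcd_dvd_right _ _)
  have d3l : q₃ ∣ ℓ := hq3d.trans (Nat.gcd_dvd_right _ _)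
  have hne2 : ∀ q : ℕ, q ∣ ℓ → q ≠ 2 := by
    intro q hq hq2'
    rw [hq2'] at hq
    rw [Nat.odd_iff] at hℓodd
    omega
  have hd12 : q₁ ≠ q₂ := by
    intro h
    obtain ⟨k, hk⟩ := g12
    have hq12 : q₁ ∣ 2 := hq1.dvd_of_dvd_pow (hk ▸ Nat.dvd_gcd d1N (h ▸ d2N))
    exact hne2 q₁ d1l ((Nat.prime_dvd_prime_iff_eq hq1 Nat.prime_two).mp hq12)
  have hd13 : q₁ ≠ q₃ := by
    intro h
    obtain ⟨k, hk⟩ := g13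
    have hq13 : q₁ ∣ 2 := hq1.dvd_of_dvd_pow (hk ▸ Nat.dvd_gcd d1N (h ▸ d3N))
    exact hne2 q₁ d1l ((Nat.prime_dvd_prime_iff_eq hq1 Nat.prime_two).mp hq13)
  have hd23 : q₂ ≠ q₃ := by
    intro h
    obtain ⟨k, hk⟩ := g23
    have hq23 : q₂ ∣ 2 := hq2.dvd_of_dvd_pow (hk ▸ Nat.dvd_gcd d2N (h ▸ d3N))
    exact hne2 q₂ d2l ((Nat.prime_dvd_prime_iff_eq hq2 Nat.prime_two).mp hq23)
  have hsub : ({q₁, q₂, q₃} : Finset ℕ) ⊆ ℓ.primeFactors := by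
    intro q hq
    simp only [Finset.mem_insert, Finset.mem_singleton] at hq
    rcases hq with rfl | rfl | rfl
    · exact Nat.mem_primeFactors.mpr ⟨hq1, d1l, hℓpos.ne'⟩
    · exact Nat.mem_primeFactors.mpr ⟨hq2, d2l, hℓpos.ne'⟩
    · exact Nat.mem_primeFactors.mpr ⟨hq3, d3l, hℓpos.ne'⟩
  have hcard : ({q₁, q₂, q₃} : Finset ℕ).card = 3 := by
    rw [Finset.card_insert_of_notMem (by simp [hd12, hd13]),
      Finset.card_insert_of_notMem (by simp [hd23]), Finset.card_singleton]
  have := Finset.card_le_card hsub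
  omega

theorem stmt_16 (ℓ : ℕ) (hℓpos : 0 < ℓ) (hℓodd : Odd ℓ)
    (hfac : ℓ.primeFactors.card ≤ 2) (n : ℕ) (hlow : 22 ≤ n) (hhigh : n ≤ 476) :
    ¬ IsPowerful (Omega ℓ n) := by
  rcases le_or_gt n 32 with h | h
  · exact key2_s16 17 19 23 ℓ n (by norm_num) (by norm_num) (by norm_num) (by norm_num) (by norm_num)
      (by norm_num) ⟨by norm_num, by norm_num⟩ ⟨1, by norm_num⟩ ⟨1, by norm_num⟩ ⟨1, by norm_num⟩
      hℓodd hfac (by omega) (by omega)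
  rcases le_or_gt n 44 with h | h
  · exact key2_s16 23 29 31 ℓ n (by norm_num) (by norm_num) (by norm_num) (by norm_num) (by norm_num)
      (by norm_num) ⟨by norm_num, by norm_num⟩ ⟨1, by norm_num⟩ ⟨1, by norm_num⟩ ⟨1, by norm_num⟩
      hℓodd hfac (by omega) (by omega)
  rcases le_or_gt n 56 with h | h
  · exact key2_s16 29 37 41 ℓ n (by norm_num) (by norm_num) (by norm_num) (by norm_num) (by norm_num)
      (by norm_num) ⟨by norm_num, by norm_num⟩ ⟨2, by norm_num⟩ ⟨2, by norm_num⟩ ⟨2, by norm_num⟩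
      hℓodd hfac (by omega) (by omega)
  rcases le_or_gt n 84 with h | h
  · exact key2_s16 43 47 53 ℓ n (by norm_num) (by norm_num) (by norm_num) (by norm_num) (by norm_num)
      (by norm_num) ⟨by norm_num, by norm_num⟩ ⟨1, by norm_num⟩ ⟨1, by norm_num⟩ ⟨1, by norm_num⟩
      hℓodd hfac (by omega) (by omega)
  rcases le_or_gt n 140 with h | h
  · exact key2_s16 71 73 83 ℓ n (by norm_num) (by norm_num) (by norm_num) (by norm_num) (by norm_num)
      (by norm_num) ⟨by norm_num, by norm_num⟩ ⟨1, by norm_num⟩ ⟨1, by norm_num⟩ ⟨1, by norm_num⟩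
      hℓodd hfac (by omega) (by omega)
  rcases le_or_gt n 260 with h | h
  · exact key2_s16 131 137 139 ℓ n (by norm_num) (by norm_num) (by norm_num) (by norm_num) (by norm_num)
      (by norm_num) ⟨by norm_num, by norm_num⟩ ⟨1, by norm_num⟩ ⟨1, by norm_num⟩ ⟨1, by norm_num⟩
      hℓodd hfac (by omega) (by omega)
  · exact key2_s16 239 241 257 ℓ n (by norm_num) (by norm_num) (by norm_num) (by norm_num) (by norm_num)
      (by norm_num) ⟨by norm_num, by norm_num⟩ ⟨1, by norm_num⟩ ⟨1, by norm_num⟩ ⟨4, by norm_num⟩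
      hℓodd hfac (by omega) (by omega)
end

section
/- Let p be an odd prime, let ℓ be a positive odd integer with gcd(p(p−1), ℓ) = 1, and let a be a positive integer with p ∣ a^ℓ + 1 and p ∤ a − 1. Then p divides a + 1. -/
theorem stmt_19 (p ℓ a : ℕ) (hp : p.Prime) (hpodd : Odd p)
    (hℓpos : 0 < ℓ) (hℓodd : Odd ℓ) (hgcd : Nat.gcd (p * (p - 1)) ℓ = 1)
    (ha : 0 < a) (hdvd : p ∣ a ^ ℓ + 1) (hndvd : ¬ p ∣ a - 1) :
    p ∣ a + 1 := by
  haveI : Fact p.Prime := ⟨hp⟩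
  set x : ZMod p := (a : ZMod p) with hx
  have hxl : x ^ ℓ = -1 := by
    have h0 : ((a ^ ℓ + 1 : ℕ) : ZMod p) = 0 := by
      exact (ZMod.natCast_eq_zero_iff _ _).mpr hdvd
    push_cast at h0
    linear_combination h0
  have hxne : x ≠ 0 := by
    intro h
    rw [h, zero_pow hℓpos.ne'] at hxl
    exact absurd hxl (by norm_num)
  have hx2 : x ^ 2 = 1 := by
    have hord2l : orderOf x ∣ 2 * ℓ := by
      apply orderOf_dvd_of_pow_eq_one
      rw [mul_comm, pow_mul, hxl]
      simp
    have hordp : orderOf x ∣ p - 1 := by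
      have := ZMod.pow_card_sub_one_eq_one hxne
      exact orderOf_dvd_of_pow_eq_one this
    have hcop : Nat.Coprime (p - 1) ℓ :=
      Nat.Coprime.coprime_dvd_left (Dvd.intro_left p rfl) hgcd
    have hcop2 : Nat.Coprime (orderOf x) ℓ :=
      Nat.Coprime.coprime_dvd_left hordp hcop
    have : orderOf x ∣ 2 := (Nat.Coprime.dvd_of_dvd_mul_right hcop2) hord2l
    exact orderOf_dvd_iff_pow_eq_one.mp this
  have : (x - 1) * (x + 1) = 0 := by ring_nf; linear_combination hx2
  rcases mul_eq_zero.mp this with h1 | h2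
  · exfalso
    apply hndvd
    have : ((a - 1 : ℕ) : ZMod p) = 0 := by
      have ha1 : (a - 1 : ℕ) + 1 = a := Nat.succ_pred_eq_of_pos ha
      have : ((a - 1 : ℕ) : ZMod p) + 1 = x := by rw [hx, ← ha1]; push_cast; ring
      linear_combination this + h1
    exact (ZMod.natCast_eq_zero_iff _ _).mp this
  · have : ((a + 1 : ℕ) : ZMod p) = 0 := by push_cast; linear_combination h2
    exact (ZMod.natCast_eq_zero_iff _ _).mp this
end
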